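/- arXiv:1804.10355 — 2 statements merged into one kernel-verified Lean document; each statement's English description precedes it below -/
import Mathlib

section
/- If a memory stack m is coherent with the empty memory (m ⌢ ∅), then every identifier occurring in m occurs exactly once in m. -/
/-- RCCS memory stacks: `m ::= ∅ | ⟨i, λ, P⟩.m | fork.m`. -/
inductive Mem (I L P : Type*) where
  | empty : Mem I L P
  | ev : I → L → P → Mem I L P → Mem I L P
  | fork : Mem I L P → Mem I L P

/-- The list of identifiers occurring in a memory stack. -/
def Mem.ids {I L P : Type*} : Mem I L P → List I
  | .empty => []
  | .ev i _ _ m => i :: m.ids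
  | .fork m => m.ids

/-- The coherence relation on memory stacks: the smallest symmetric relation closed under
the rules em., ev., syn. and fo., where `bar` is the complement on labels. -/
inductive Coh {I L P : Type*} (bar : L → L) : Mem I L P → Mem I L P → Prop where
  | symm {m m'} : Coh bar m m' → Coh bar m' m
  | em : Coh bar .empty .empty
  | ev {m m' : Mem I L P} {i l p} : Coh bar m m' →
      i ∉ m.ids → i ∉ m'.ids → Coh bar (.ev i l p m) m'
  | syn {m m' : Mem I L P} {i l p q} : Coh bar m m' →
      i ∉ m.ids → i ∉ m'.ids → Coh bar (.ev i l p m) (.ev i (bar l) q m')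
  | fo {m : Mem I L P} : Coh bar m .empty → Coh bar (.fork m) (.fork m)


theorem coh_nodup {I L P : Type*} (bar : L → L) {m m' : Mem I L P}
    (h : Coh bar m m') : m.ids.Nodup ∧ m'.ids.Nodup := by
  induction h with
  | symm _ ih => exact ⟨ih.2, ih.1⟩
  | em => simp [Mem.ids]
  | ev _ h1 _ ih => exact ⟨List.nodup_cons.2 ⟨h1, ih.1⟩, ih.2⟩
  | syn _ h1 h2 ih => exact ⟨List.nodup_cons.2 ⟨h1, ih.1⟩, List.nodup_cons.2 ⟨h2, ih.2⟩⟩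
  | fo _ ih => exact ⟨ih.1, ih.1⟩

/-- If a memory stack is coherent with the empty memory, every identifier occurring
in it occurs exactly once. -/
theorem coherent_ids_unique {I L P : Type*} [DecidableEq I] (bar : L → L)
    (m : Mem I L P) (h : Coh bar m Mem.empty) :
    ∀ i ∈ m.ids, m.ids.count i = 1 := by
  exact fun i hi => List.count_eq_one_of_mem (coh_nodup bar h).1 hi
end

section
/- The encoding of a single memory stack is a linear order (chain) under causality: for any memory stack m, the identified configuration structure ⟦m⟧ has configurations totally ordered by inclusion, and hence has a unique maximal configuration. -/
/-- The number of memory-event entries in a memory stack. -/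
def Mem.numE {I L P : Type*} : Mem I L P → ℕ
  | .empty => 0
  | .ev _ _ _ m => m.numE + 1
  | .fork m => m.numE

/-- The events of the encoding `⟦m⟧` of a memory stack, as natural numbers:
each memory event adds one fresh event. -/
def encE {I L P : Type*} : Mem I L P → Set ℕ
  | .empty => ∅
  | .fork m => encE m
  | .ev _ _ _ m => insert m.numE (encE m)

/-- The configurations of the encoding `⟦m⟧` of a memory stack: `⟦∅⟧` has the single
configuration `∅`, forks are forgotten, and a memory event adds a fresh event on top of
every maximal configuration. -/
def encC {I L P : Type*} : Mem I L P → Set (Set ℕ)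
  | .empty => {∅}
  | .fork m => encC m
  | .ev _ _ _ m =>
      encC m ∪ { y | ∃ x ∈ encC m, (∀ z ∈ encC m, x ⊆ z → x = z) ∧ y = insert m.numE x }

/-- The identifier function of the encoding `⟦m⟧` of a memory stack. -/
def encId {I L P : Type*} : Mem I L P → ℕ → Option I
  | .empty => fun _ => none
  | .fork m => encId m
  | .ev i _ _ m => fun k => if k = m.numE then some i else encId m k


lemma encC_chain_top {I L P : Type*} (m : Mem I L P) :
    (∀ x ∈ encC m, ∀ y ∈ encC m, x ⊆ y ∨ y ⊆ x) ∧
    ∃ t ∈ encC m, ∀ y ∈ encC m, y ⊆ t := by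
  induction m with
  | empty => simp [encC]
  | fork m ih => simpa [encC] using ih
  | ev i l p m ih =>
    obtain ⟨hch, t, ht, htop⟩ := ih
    have hmax : ∀ x ∈ encC m, (∀ z ∈ encC m, x ⊆ z → x = z) → x = t := by
      intro x hx hm
      exact hm t ht (htop x hx)
    constructor
    · rintro x (hx | ⟨x', hx', hx'max, rfl⟩) y (hy | ⟨y', hy', hy'max, rfl⟩)
      · exact hch x hx y hy
      · left
        rw [hmax y' hy' hy'max]
        exact (htop x hx).trans (Set.subset_insert _ _)
      · right
        rw [hmax x' hx' hx'max]
        exact (htop y hy).trans (Set.subset_insert _ _)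
      · rw [hmax x' hx' hx'max, hmax y' hy' hy'max]
        left; rfl
    · refine ⟨insert m.numE t, Or.inr ⟨t, ht, fun z hz hsub => subset_antisymm hsub (htop z hz), rfl⟩, ?_⟩
      rintro y (hy | ⟨y', hy', hy'max, rfl⟩)
      · exact (htop y hy).trans (Set.subset_insert _ _)
      · rw [hmax y' hy' hy'max]

/-- The encoding of a single memory stack is a chain: its configurations are totally
ordered by inclusion, and hence it has a unique maximal configuration. -/
theorem encoding_is_chain {I L P : Type*} (m : Mem I L P) :
    (∀ x ∈ encC m, ∀ y ∈ encC m, x ⊆ y ∨ y ⊆ x) ∧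
    (∃! x, x ∈ encC m ∧ ∀ y ∈ encC m, x ⊆ y → x = y) := by
  obtain ⟨hch, t, ht, htop⟩ := encC_chain_top m
  refine ⟨hch, t, ⟨ht, fun y hy hsub => subset_antisymm hsub (htop y hy)⟩, ?_⟩
  rintro x ⟨hx, hxmax⟩
  exact hxmax t ht (htop x hx)
end
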